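/- Microscopic kernel limit: fix complex numbers a and b with a + b != 0. Setting z = 1 - a/N and w = 1 - b/N, the kernel K_M(zw) = sum_{p=0}^{M-1} (zw)^p with M = N + L (L fixed) satisfies K_M(zw) / N -> (1 - e^{-(a+b)})/(a+b) as N -> infinity. -/

import Mathlib

open Filter Complex

theorem stmt_9 (a b : ℂ) (hab : a + b ≠ 0) (L : ℕ) :
    Tendsto
      (fun N : ℕ =>
        (∑ p ∈ Finset.range (N + L), ((1 - a / N) * (1 - b / N)) ^ p) / (N : ℂ))
      atTop (nhds ((1 - Complex.exp (-(a + b))) / (a + b))) := by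
  set f : ℕ → ℂ := fun N => (1 - a / N) * (1 - b / N) with hf
  -- basic limits
  have hN : Tendsto (fun N : ℕ => ((N : ℂ))⁻¹) atTop (nhds 0) :=
    tendsto_inv_atTop_nhds_zero_nat (𝕜 := ℂ)
  have hf1 : Tendsto f atTop (nhds 1) := by
    have : Tendsto (fun N : ℕ => (1 - a * (N:ℂ)⁻¹) * (1 - b * (N:ℂ)⁻¹)) atTop
        (nhds ((1 - a * 0) * (1 - b * 0))) := by
      exact ((tendsto_const_nhds.sub ((hN.const_mul a))).mul
        (tendsto_const_nhds.sub ((hN.const_mul b))))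
    simpa [hf, div_eq_mul_inv] using this
  -- (f N - 1) * N → -(a+b)
  have hd : Tendsto (fun N : ℕ => (f N - 1) * N) atTop (nhds (-(a + b))) := by
    have h1 : Tendsto (fun N : ℕ => -(a + b) + a * b * (N:ℂ)⁻¹) atTop
        (nhds (-(a + b) + a * b * 0)) := tendsto_const_nhds.add (hN.const_mul _)
    rw [show -(a+b) = -(a+b) + a*b*0 by ring]
    apply h1.congr'
    filter_upwards [eventually_ne_atTop 0] with N hNe
    have hNz : (N : ℂ) ≠ 0 := Nat.cast_ne_zero.mpr hNe
    simp only [hf]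
    field_simp
    ring
  have hfne1 : ∀ᶠ N in atTop, f N ≠ 1 := by
    filter_upwards [hd.eventually_ne (neg_ne_zero.mpr hab), eventually_ne_atTop 0]
      with N h hNe
    intro h1
    exact h (by simp [h1])
  have hfne0 : ∀ᶠ N in atTop, f N ≠ 0 :=
    hf1.eventually_ne one_ne_zero
  -- slope of log at 1
  have hslope : Tendsto (fun z : ℂ => Complex.log z / (z - 1))
      (nhdsWithin 1 {(1:ℂ)}ᶜ) (nhds 1) := by
    have h := hasDerivAt_iff_tendsto_slope.mp
      (Complex.hasDerivAt_log Complex.one_mem_slitPlane)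
    simp only [inv_one] at h
    apply h.congr
    intro z
    simp [slope_def_field, div_eq_inv_mul]
  have hfW : Tendsto f atTop (nhdsWithin 1 {(1:ℂ)}ᶜ) := by
    rw [tendsto_nhdsWithin_iff]
    exact ⟨hf1, hfne1⟩
  have hlogdiv : Tendsto (fun N => Complex.log (f N) / (f N - 1)) atTop (nhds 1) :=
    hslope.comp hfW
  -- (f N - 1) * (N + L) → -(a+b)
  have hdL : Tendsto (fun N : ℕ => (f N - 1) * ((N : ℂ) + L)) atTop (nhds (-(a + b))) := by
    have h3 : Tendsto (fun N : ℕ => f N - 1) atTop (nhds 0) := by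
      simpa using hf1.sub (tendsto_const_nhds (x := (1:ℂ)))
    have h2 : Tendsto (fun N : ℕ => (f N - 1) * N + (f N - 1) * L) atTop
        (nhds (-(a + b) + 0 * L)) := hd.add (h3.mul_const (L : ℂ))
    simpa [mul_add] using h2.congr (fun N => by ring)
  -- (N+L) * log (f N) → -(a+b)
  have hmlog : Tendsto (fun N : ℕ => ((N : ℂ) + L) * Complex.log (f N)) atTop
      (nhds (-(a + b))) := by
    have h := hdL.mul hlogdiv
    rw [mul_one] at h
    apply h.congr'
    filter_upwards [hfne1] with N h1
    have : f N - 1 ≠ 0 := sub_ne_zero.mpr h1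
    field_simp
  -- f N ^ (N + L) → exp (-(a+b))
  have hpow : Tendsto (fun N : ℕ => f N ^ (N + L)) atTop
      (nhds (Complex.exp (-(a + b)))) := by
    have h := (Complex.continuous_exp.tendsto _).comp hmlog
    apply h.congr'
    filter_upwards [hfne0] with N h0
    show Complex.exp (((N : ℂ) + L) * Complex.log (f N)) = f N ^ (N + L)
    rw [show ((N : ℂ) + L) = ((N + L : ℕ) : ℂ) by push_cast; ring,
      Complex.exp_nat_mul, Complex.exp_log h0]
  -- combine
  have hmain : Tendsto (fun N : ℕ => (f N ^ (N + L) - 1) / ((f N - 1) * N)) atTop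
      (nhds ((Complex.exp (-(a + b)) - 1) / (-(a + b)))) :=
    (hpow.sub tendsto_const_nhds).div hd (neg_ne_zero.mpr hab)
  have : (Complex.exp (-(a + b)) - 1) / (-(a + b)) =
      (1 - Complex.exp (-(a + b))) / (a + b) := by
    rw [div_neg, ← neg_div, neg_sub]
  rw [← this]
  apply hmain.congr'
  filter_upwards [hfne1] with N h1
  rw [geom_sum_eq h1]
  rw [div_div]
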